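/- Let R_m = sup{ |{t ∈ [0,∞) : |Λ_m f(t)| ≥ 1}| / ∫₀^∞ |f(t)| dt : f ∈ F^sp_m }. Then liminf_{m→∞} R_m ≥ sup{ (x + y) / ( 2e^x − x − 4 − y + 2(2 − e^x)(e^y + 1) − 2·ln(2(2 − e^x)) ) }, where the supremum on the right-hand side is taken over all real x ∈ [ln(3/2), ln 2) and all real y satisfying e^{−y} ≤ 2(2 − e^x) ≤ 3 e^{−y}. -/

import Mathlib

open MeasureTheory Real Set

/-- The operator `Λ_m`. -/
noncomputable def Lam (m : ℕ) (f : ℝ → ℝ) (t : ℝ) : ℝ :=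
  ((1 + (m : ℝ)) / t ^ (1 + (m : ℝ) / 2)) * (∫ s in (0:ℝ)..t, f s * s ^ ((m : ℝ) / 2)) - f t

/-- The coefficient `D(b,m) = (2(1+m)/m)(2 b^{-m/2} - 1)`. -/
noncomputable def Dcoef (m : ℕ) (b : ℝ) : ℝ :=
  (2 * (1 + (m : ℝ)) / (m : ℝ)) * (2 * b ^ (-(m : ℝ) / 2) - 1)

/-- The parameter set `S_m`. -/
def Sset (m : ℕ) : Set (ℝ × ℝ) :=
  {p : ℝ × ℝ | 1 < p.1 ∧ p.1 < p.2 ∧ 0 < Dcoef m p.1 ∧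
    -(2 + (m : ℝ)) / (m : ℝ) + Dcoef m p.1 * p.1 ^ ((m : ℝ) / 2) < 0 ∧
    0 < -(2 + (m : ℝ)) / (m : ℝ) + Dcoef m p.1 * p.2 ^ ((m : ℝ) / 2) ∧
    -(2 + (m : ℝ)) / (m : ℝ) + Dcoef m p.1 * p.2 ^ ((m : ℝ) / 2) < 2}

/-- The function `f_{b,d,m}` from the class `F^sp_m`. -/
noncomputable def fsp (m : ℕ) (b d t : ℝ) : ℝ :=
  if 1 < t ∧ t ≤ b then (2 + (m : ℝ)) / (m : ℝ) - (2 * (1 + (m : ℝ)) / (m : ℝ)) * t ^ ((m : ℝ) / 2)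
  else if b < t ∧ t ≤ d then -(2 + (m : ℝ)) / (m : ℝ) + Dcoef m b * t ^ ((m : ℝ) / 2)
  else 0

/-- `t₀(b,m)`. -/
noncomputable def t0 (m : ℕ) (b : ℝ) : ℝ :=
  ((2 + (m : ℝ)) / (2 * (1 + (m : ℝ)))) ^ (2 / (m : ℝ)) *
    (2 * b ^ (-(m : ℝ) / 2) - 1) ^ (-(2 / (m : ℝ)))

/-- The denominator of `W(b,d,m)`. -/
noncomputable def denom (m : ℕ) (b d : ℝ) : ℝ :=
  (m : ℝ) / (2 + (m : ℝ)) - ((2 + (m : ℝ)) / (m : ℝ)) * d - (2 * (m : ℝ) / (2 + (m : ℝ))) * b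
    + (4 * (1 + (m : ℝ)) / ((m : ℝ) * (2 + (m : ℝ)))) * (2 * b ^ (-(m : ℝ) / 2) - 1)
      * d ^ (1 + (m : ℝ) / 2)
    + 2 * t0 m b

/-- `W(b,d,m)`. -/
noncomputable def Wf (m : ℕ) (b d : ℝ) : ℝ := (d - 1) / denom m b d

/-- The weak-type ratio of `f_{b,d,m}` under `Λ_m`. -/
noncomputable def ratio (m : ℕ) (b d : ℝ) : ℝ :=
  (MeasureTheory.volume {t : ℝ | 0 ≤ t ∧ 1 ≤ |Lam m (fsp m b d) t|}).toReal /
    ∫ t in Set.Ici (0 : ℝ), |fsp m b d t|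

/-- The restricted weak-type constant of `Λ_m` over the class `F^sp_m`. -/
noncomputable def Rsp (m : ℕ) : ℝ :=
  sSup {r : ℝ | ∃ b d : ℝ, (b, d) ∈ Sset m ∧ r = ratio m b d}

namespace StmtAux

/-! ### Interval integral helpers -/

lemma integral_congr_Ioc {f g : ℝ → ℝ} {u v : ℝ} (huv : u ≤ v)
    (h : ∀ x ∈ Ioc u v, f x = g x) :
    ∫ x in u..v, f x = ∫ x in u..v, g x := by
  rw [intervalIntegral.integral_of_le huv, intervalIntegral.integral_of_le huv]
  exact setIntegral_congr_fun measurableSet_Ioc h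

lemma intervalIntegrable_congr_Ioc {f g : ℝ → ℝ} {u v : ℝ} (huv : u ≤ v)
    (hg : IntervalIntegrable g volume u v)
    (h : ∀ x ∈ Ioc u v, g x = f x) :
    IntervalIntegrable f volume u v := by
  rw [intervalIntegrable_iff, uIoc_of_le huv] at hg ⊢
  exact hg.congr_fun h measurableSet_Ioc

lemma continuous_one_rpow (c e r : ℝ) (hr : 0 ≤ r) :
    Continuous fun t : ℝ => c + e * t ^ r :=
  continuous_const.add (continuous_const.mul (Real.continuous_rpow_const hr))

lemma continuous_two_rpow (c e r1 r2 : ℝ) (h1 : 0 ≤ r1) (h2 : 0 ≤ r2) :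
    Continuous fun t : ℝ => c * t ^ r1 + e * t ^ r2 :=
  (continuous_const.mul (Real.continuous_rpow_const h1)).add
    (continuous_const.mul (Real.continuous_rpow_const h2))

lemma integral_two_rpow (c e r1 r2 u v : ℝ) (h1 : 0 ≤ r1) (h2 : 0 ≤ r2) :
    ∫ t in u..v, (c * t ^ r1 + e * t ^ r2)
      = c * ((v ^ (r1+1) - u ^ (r1+1)) / (r1+1)) + e * ((v ^ (r2+1) - u ^ (r2+1)) / (r2+1)) := by
  rw [intervalIntegral.integral_add (f := fun t => c * t ^ r1) (g := fun t => e * t ^ r2)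
      ((continuous_const.mul (Real.continuous_rpow_const h1)).intervalIntegrable _ _)
      ((continuous_const.mul (Real.continuous_rpow_const h2)).intervalIntegrable _ _),
    intervalIntegral.integral_const_mul, intervalIntegral.integral_const_mul,
    integral_rpow (Or.inl (by linarith)), integral_rpow (Or.inl (by linarith))]

lemma integral_one_rpow (c e r u v : ℝ) (hr : 0 ≤ r) :
    ∫ t in u..v, (c + e * t ^ r)
      = c * (v - u) + e * ((v ^ (r+1) - u ^ (r+1)) / (r+1)) := by
  rw [intervalIntegral.integral_add (f := fun _ => c) (g := fun t => e * t ^ r) (intervalIntegrable_const)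
      ((continuous_const.mul (Real.continuous_rpow_const hr)).intervalIntegrable _ _),
    intervalIntegral.integral_const, intervalIntegral.integral_const_mul,
    integral_rpow (Or.inl (by linarith))]
  rw [smul_eq_mul]; ring

/-! ### Facts bundle -/

structure Facts (m : ℕ) (b d : ℝ) : Prop where
  hm : 2 ≤ m
  hb : 1 < b
  hbd : b < d
  hD : 0 < Dcoef m b
  hcb : -(2 + (m : ℝ)) / (m : ℝ) + Dcoef m b * b ^ ((m : ℝ) / 2) < 0
  hcd0 : 0 < -(2 + (m : ℝ)) / (m : ℝ) + Dcoef m b * d ^ ((m : ℝ) / 2)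
  hcd2 : -(2 + (m : ℝ)) / (m : ℝ) + Dcoef m b * d ^ ((m : ℝ) / 2) < 2

lemma facts_of_mem {m : ℕ} {b d : ℝ} (hm : 2 ≤ m) (hS : (b, d) ∈ Sset m) : Facts m b d := by
  obtain ⟨h1, h2, h3, h4, h5, h6⟩ := hS
  exact ⟨hm, h1, h2, h3, h4, h5, h6⟩

namespace Facts

variable {m : ℕ} {b d : ℝ}

lemma hM (h : Facts m b d) : (2:ℝ) ≤ (m:ℝ) := by exact_mod_cast h.hm
lemma hM0 (h : Facts m b d) : (0:ℝ) < (m:ℝ) := by have := h.hM; linarith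
lemma hb0 (h : Facts m b d) : (0:ℝ) < b := lt_trans one_pos h.hb
lemma hd1 (h : Facts m b d) : (1:ℝ) < d := lt_trans h.hb h.hbd
lemma hd0 (h : Facts m b d) : (0:ℝ) < d := lt_trans one_pos h.hd1
lemma hZ (h : Facts m b d) : 0 < 2 * b ^ (-(m : ℝ) / 2) - 1 := by
  have hM0 := h.hM0
  have hc : 0 < 2 * (1 + (m:ℝ)) / (m:ℝ) := by positivity
  by_contra hc2
  push_neg at hc2
  have : Dcoef m b ≤ 0 := mul_nonpos_of_nonneg_of_nonpos hc.le hc2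
  exact absurd h.hD (not_lt.mpr this)
lemma t0_pos (h : Facts m b d) : 0 < t0 m b := by
  have hM0 := h.hM0
  unfold t0
  have h1 : (0:ℝ) < (2 + (m:ℝ)) / (2 * (1 + (m:ℝ))) := by positivity
  exact mul_pos (Real.rpow_pos_of_pos h1 _) (Real.rpow_pos_of_pos h.hZ _)
lemma t0_rpow (h : Facts m b d) : t0 m b ^ ((m:ℝ)/2)
    = ((2 + (m:ℝ)) / (2 * (1 + (m:ℝ)))) * (2 * b ^ (-(m : ℝ) / 2) - 1)⁻¹ := by
  have hM0 := h.hM0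
  have h1 : (0:ℝ) ≤ (2 + (m:ℝ)) / (2 * (1 + (m:ℝ))) := by positivity
  have hZ := h.hZ
  have hMne : (m:ℝ) ≠ 0 := h.hM0.ne'
  unfold t0
  rw [Real.mul_rpow (Real.rpow_nonneg h1 _) (Real.rpow_nonneg hZ.le _),
      ← Real.rpow_mul h1, ← Real.rpow_mul hZ.le,
      show (2/(m:ℝ))*((m:ℝ)/2) = 1 by field_simp,
      show (-(2/(m:ℝ)))*((m:ℝ)/2) = -1 by field_simp,
      Real.rpow_one, Real.rpow_neg_one]
lemma D_t0 (h : Facts m b d) : Dcoef m b * t0 m b ^ ((m:ℝ)/2) = (2 + (m:ℝ)) / (m:ℝ) := by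
  rw [h.t0_rpow]
  unfold Dcoef
  have hZ := h.hZ
  have hM0 := h.hM0
  have hZ' : 2 * b ^ (-(m : ℝ) / 2) - 1 ≠ 0 := hZ.ne'
  set Z := 2 * b ^ (-(m : ℝ) / 2) - 1 with hZdef
  field_simp
lemma b_lt_t0 (h : Facts m b d) : b < t0 m b := by
  have hM0 := h.hM0
  have hlt : Dcoef m b * b ^ ((m:ℝ)/2) < Dcoef m b * t0 m b ^ ((m:ℝ)/2) := by
    rw [h.D_t0]
    have hcb := h.hcb
    rw [neg_div] at hcb
    linarith
  have hp : b ^ ((m:ℝ)/2) < t0 m b ^ ((m:ℝ)/2) := lt_of_mul_lt_mul_left hlt h.hD.le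
  by_contra hc
  push_neg at hc
  exact absurd hp (not_lt.mpr (Real.rpow_le_rpow h.t0_pos.le hc (by positivity)))
lemma t0_lt_d (h : Facts m b d) : t0 m b < d := by
  have hM0 := h.hM0
  have hlt : Dcoef m b * t0 m b ^ ((m:ℝ)/2) < Dcoef m b * d ^ ((m:ℝ)/2) := by
    rw [h.D_t0]
    have hcd0 := h.hcd0
    rw [neg_div] at hcd0
    linarith
  have hp : t0 m b ^ ((m:ℝ)/2) < d ^ ((m:ℝ)/2) := lt_of_mul_lt_mul_left hlt h.hD.le
  by_contra hc
  push_neg at hc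
  exact absurd hp (not_lt.mpr (Real.rpow_le_rpow h.hd0.le hc (by positivity)))

end Facts


section Main

variable {m : ℕ} {b d : ℝ}

lemma fsp_zero_left (m : ℕ) (b d : ℝ) (hb : 1 ≤ b) {t : ℝ} (ht : t ≤ 1) : fsp m b d t = 0 := by
  unfold fsp
  rw [if_neg (by rintro ⟨h1, _⟩; linarith), if_neg (by rintro ⟨h1, _⟩; linarith)]

lemma fsp_one (m : ℕ) (b d : ℝ) {t : ℝ} (h1 : 1 < t) (h2 : t ≤ b) :
    fsp m b d t = (2 + (m:ℝ)) / (m:ℝ) - (2 * (1 + (m:ℝ)) / (m:ℝ)) * t ^ ((m:ℝ)/2) := by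
  unfold fsp; rw [if_pos ⟨h1, h2⟩]

lemma fsp_two (m : ℕ) (b d : ℝ) (hb : 1 ≤ b) {t : ℝ} (h1 : b < t) (h2 : t ≤ d) :
    fsp m b d t = -(2 + (m:ℝ)) / (m:ℝ) + Dcoef m b * t ^ ((m:ℝ)/2) := by
  unfold fsp
  rw [if_neg (by rintro ⟨_, hh⟩; linarith), if_pos ⟨h1, h2⟩]

lemma fsp_zero_right (m : ℕ) (b d : ℝ) (hbd : b ≤ d) {t : ℝ} (ht : d < t) : fsp m b d t = 0 := by
  unfold fsp
  rw [if_neg (by rintro ⟨_, hh⟩; linarith), if_neg (by rintro ⟨_, hh⟩; linarith)]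

lemma II01 (hb : 1 ≤ b) :
    IntervalIntegrable (fun s => fsp m b d s * s ^ ((m:ℝ)/2)) volume 0 1 :=
  intervalIntegrable_congr_Ioc zero_le_one (intervalIntegrable_const (c := (0:ℝ)))
    (fun s hs => by rw [fsp_zero_left m b d hb hs.2, zero_mul])

lemma II1x (h : Facts m b d) {v : ℝ} (h1 : 1 ≤ v) (h2 : v ≤ b) :
    IntervalIntegrable (fun s => fsp m b d s * s ^ ((m:ℝ)/2)) volume 1 v := by
  refine intervalIntegrable_congr_Ioc h1
    ((continuous_two_rpow ((2+(m:ℝ))/(m:ℝ)) (-(2*(1+(m:ℝ))/(m:ℝ))) ((m:ℝ)/2) ((m:ℝ)/2+(m:ℝ)/2)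
      (by positivity) (by positivity)).intervalIntegrable 1 v) (fun s hs => ?_)
  rw [fsp_one m b d hs.1 (hs.2.trans h2), Real.rpow_add (lt_trans zero_lt_one hs.1)]
  ring

lemma IIbx (h : Facts m b d) {u v : ℝ} (hbu : b ≤ u) (huv : u ≤ v) (hvd : v ≤ d) :
    IntervalIntegrable (fun s => fsp m b d s * s ^ ((m:ℝ)/2)) volume u v := by
  refine intervalIntegrable_congr_Ioc huv
    ((continuous_two_rpow (-(2+(m:ℝ))/(m:ℝ)) (Dcoef m b) ((m:ℝ)/2) ((m:ℝ)/2+(m:ℝ)/2)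
      (by positivity) (by positivity)).intervalIntegrable u v) (fun s hs => ?_)
  have hbs : b < s := lt_of_le_of_lt hbu hs.1
  rw [fsp_two m b d h.hb.le hbs (hs.2.trans hvd),
    Real.rpow_add (lt_trans h.hb0 hbs)]
  ring

lemma IIdx (h : Facts m b d) {u v : ℝ} (hdu : d ≤ u) (huv : u ≤ v) :
    IntervalIntegrable (fun s => fsp m b d s * s ^ ((m:ℝ)/2)) volume u v :=
  intervalIntegrable_congr_Ioc huv (intervalIntegrable_const (c := (0:ℝ)))
    (fun s hs => by rw [fsp_zero_right m b d h.hbd.le (lt_of_le_of_lt hdu hs.1), zero_mul])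

lemma F_le_one (hb : 1 ≤ b) {t : ℝ} (h0 : 0 ≤ t) (h1 : t ≤ 1) :
    ∫ s in (0:ℝ)..t, fsp m b d s * s ^ ((m:ℝ)/2) = 0 := by
  rw [integral_congr_Ioc h0 (g := fun _ => (0:ℝ)) (fun s hs => by
    rw [fsp_zero_left m b d hb (hs.2.trans h1), zero_mul])]
  simp

lemma F_mid (h : Facts m b d) {t : ℝ} (h1 : 1 ≤ t) (h2 : t ≤ b) :
    ∫ s in (0:ℝ)..t, fsp m b d s * s ^ ((m:ℝ)/2)
      = (2/(m:ℝ)) * (1 - t ^ ((m:ℝ)/2)) * t ^ (1 + (m:ℝ)/2) := by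
  have hM0 := h.hM0
  have ht0 : (0:ℝ) < t := lt_of_lt_of_le zero_lt_one h1
  rw [← intervalIntegral.integral_add_adjacent_intervals (II01 h.hb.le) (II1x h h1 h2),
    F_le_one h.hb.le zero_le_one le_rfl,
    integral_congr_Ioc h1 (g := fun s => ((2+(m:ℝ))/(m:ℝ)) * s^((m:ℝ)/2)
      + (-(2*(1+(m:ℝ))/(m:ℝ))) * s^((m:ℝ)/2+(m:ℝ)/2)) (fun s hs => by
        rw [fsp_one m b d hs.1 (hs.2.trans h2)]
        simp only [Real.rpow_add (lt_trans zero_lt_one hs.1)]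
        ring),
    integral_two_rpow _ _ _ _ _ _ (by positivity) (by positivity),
    Real.one_rpow, Real.one_rpow,
    show (m:ℝ)/2 + (m:ℝ)/2 + 1 = (m:ℝ)/2 + (1 + (m:ℝ)/2) by ring,
    (Real.rpow_add ht0 ((m:ℝ)/2) (1 + (m:ℝ)/2) :
      t ^ ((m:ℝ)/2 + (1 + (m:ℝ)/2)) = t ^ ((m:ℝ)/2) * t ^ (1 + (m:ℝ)/2)),
    add_comm ((m:ℝ)/2) 1]
  have e1 : (1:ℝ) + (m:ℝ)/2 ≠ 0 := by positivity
  have e2 : (m:ℝ)/2 + ((1:ℝ) + (m:ℝ)/2) ≠ 0 := by positivity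
  set U := t ^ ((m:ℝ)/2) with hU
  set V := t ^ (1 + (m:ℝ)/2) with hV
  field_simp
  ring

lemma F_hi (h : Facts m b d) {t : ℝ} (h1 : b ≤ t) (h2 : t ≤ d) :
    ∫ s in (0:ℝ)..t, fsp m b d s * s ^ ((m:ℝ)/2)
      = (-(2/(m:ℝ)) + (Dcoef m b/((m:ℝ)+1)) * t ^ ((m:ℝ)/2)) * t ^ (1 + (m:ℝ)/2) := by
  have hM0 := h.hM0
  have hb0 := h.hb0
  have ht0 : (0:ℝ) < t := lt_of_lt_of_le hb0 h1
  rw [← intervalIntegral.integral_add_adjacent_intervals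
      ((II01 h.hb.le).trans (II1x h h.hb.le le_rfl)) (IIbx h le_rfl h1 h2),
    F_mid h h.hb.le le_rfl,
    integral_congr_Ioc h1 (g := fun s => (-(2+(m:ℝ))/(m:ℝ)) * s^((m:ℝ)/2)
      + (Dcoef m b) * s^((m:ℝ)/2+(m:ℝ)/2)) (fun s hs => by
        rw [fsp_two m b d h.hb.le hs.1 (hs.2.trans h2)]
        simp only [Real.rpow_add (lt_trans hb0 hs.1)]
        ring),
    integral_two_rpow _ _ _ _ _ _ (by positivity) (by positivity),
    show (m:ℝ)/2 + (m:ℝ)/2 + 1 = (m:ℝ)/2 + (1 + (m:ℝ)/2) by ring,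
    (Real.rpow_add ht0 ((m:ℝ)/2) (1 + (m:ℝ)/2) :
      t ^ ((m:ℝ)/2 + (1 + (m:ℝ)/2)) = t ^ ((m:ℝ)/2) * t ^ (1 + (m:ℝ)/2)),
    (Real.rpow_add hb0 ((m:ℝ)/2) (1 + (m:ℝ)/2) :
      b ^ ((m:ℝ)/2 + (1 + (m:ℝ)/2)) = b ^ ((m:ℝ)/2) * b ^ (1 + (m:ℝ)/2)),
    add_comm ((m:ℝ)/2) 1]
  unfold Dcoef
  rw [show -(m:ℝ)/2 = -((m:ℝ)/2) by ring, Real.rpow_neg hb0.le]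
  have e1 : (1:ℝ) + (m:ℝ)/2 ≠ 0 := by positivity
  have e2 : (m:ℝ)/2 + ((1:ℝ) + (m:ℝ)/2) ≠ 0 := by positivity
  have e3 : (m:ℝ) + 1 ≠ 0 := by positivity
  have e4 : b ^ ((m:ℝ)/2) ≠ 0 := (Real.rpow_pos_of_pos hb0 _).ne'
  set B := b ^ ((m:ℝ)/2) with hB
  set U := t ^ ((m:ℝ)/2) with hU
  set Wb := b ^ (1 + (m:ℝ)/2) with hW
  set V := t ^ (1 + (m:ℝ)/2) with hV
  field_simp
  ring

lemma F_top (h : Facts m b d) {t : ℝ} (h1 : d ≤ t) :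
    ∫ s in (0:ℝ)..t, fsp m b d s * s ^ ((m:ℝ)/2)
      = (-(2/(m:ℝ)) + (Dcoef m b/((m:ℝ)+1)) * d ^ ((m:ℝ)/2)) * d ^ (1 + (m:ℝ)/2) := by
  rw [← intervalIntegral.integral_add_adjacent_intervals (b := d)
      (((II01 h.hb.le).trans (II1x h h.hb.le le_rfl)).trans (IIbx h le_rfl h.hbd.le le_rfl))
      (IIdx h le_rfl h1),
    F_hi h h.hbd.le le_rfl,
    integral_congr_Ioc h1 (g := fun _ => (0:ℝ)) (fun s hs => by
      rw [fsp_zero_right m b d h.hbd.le hs.1, zero_mul])]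
  simp

lemma Lam_zero (h : Facts m b d) {t : ℝ} (h0 : 0 ≤ t) (h1 : t ≤ 1) :
    Lam m (fsp m b d) t = 0 := by
  unfold Lam
  rw [F_le_one h.hb.le h0 h1, mul_zero, fsp_zero_left m b d h.hb.le h1, sub_zero]

lemma Lam_one (h : Facts m b d) {t : ℝ} (h1 : 1 < t) (h2 : t ≤ b) :
    Lam m (fsp m b d) t = 1 := by
  have hM0 := h.hM0
  have ht0 : (0:ℝ) < t := lt_trans zero_lt_one h1
  have hV : t ^ (1 + (m:ℝ)/2) ≠ 0 := (Real.rpow_pos_of_pos ht0 _).ne'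
  unfold Lam
  rw [F_mid h h1.le h2, fsp_one m b d h1 h2]
  field_simp
  ring

lemma Lam_two (h : Facts m b d) {t : ℝ} (h1 : b < t) (h2 : t ≤ d) :
    Lam m (fsp m b d) t = -1 := by
  have hM0 := h.hM0
  have ht0 : (0:ℝ) < t := lt_trans h.hb0 h1
  have hV : t ^ (1 + (m:ℝ)/2) ≠ 0 := (Real.rpow_pos_of_pos ht0 _).ne'
  have e3 : (m:ℝ) + 1 ≠ 0 := by positivity
  unfold Lam
  rw [F_hi h h1.le h2, fsp_two m b d h.hb.le h1 h2]
  field_simp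
  ring

lemma Lam_tail (h : Facts m b d) {t : ℝ} (h1 : d < t) :
    |Lam m (fsp m b d) t| < 1 := by
  have hM0 := h.hM0
  have hd0 := h.hd0
  have ht0 : (0:ℝ) < t := lt_trans hd0 h1
  have hVt : (0:ℝ) < t ^ (1 + (m:ℝ)/2) := Real.rpow_pos_of_pos ht0 _
  have hVd : (0:ℝ) < d ^ (1 + (m:ℝ)/2) := Real.rpow_pos_of_pos hd0 _
  unfold Lam
  rw [F_top h h1.le, fsp_zero_right m b d h.hbd.le h1, sub_zero]
  have key : (1 + (m:ℝ)) / t ^ (1 + (m:ℝ)/2) *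
      ((-(2/(m:ℝ)) + Dcoef m b / ((m:ℝ)+1) * d ^ ((m:ℝ)/2)) * d ^ (1 + (m:ℝ)/2))
      = ((1 + (m:ℝ)) * (-(2/(m:ℝ)) + Dcoef m b / ((m:ℝ)+1) * d ^ ((m:ℝ)/2)))
        * (d ^ (1 + (m:ℝ)/2) / t ^ (1 + (m:ℝ)/2)) := by ring
  rw [key, abs_mul]
  have hG : |(1 + (m:ℝ)) * (-(2/(m:ℝ)) + Dcoef m b / ((m:ℝ)+1) * d ^ ((m:ℝ)/2))| < 1 := by
    have e3 : (m:ℝ) + 1 ≠ 0 := by positivity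
    have heq : (1 + (m:ℝ)) * (-(2/(m:ℝ)) + Dcoef m b / ((m:ℝ)+1) * d ^ ((m:ℝ)/2))
        = (-(2 + (m : ℝ)) / (m : ℝ) + Dcoef m b * d ^ ((m : ℝ) / 2)) - 1 := by
      field_simp
      ring
    rw [heq, abs_lt]
    constructor <;> [linarith [h.hcd0]; linarith [h.hcd2]]
  have hQ : |d ^ (1 + (m:ℝ)/2) / t ^ (1 + (m:ℝ)/2)| < 1 := by
    rw [abs_of_pos (by positivity), div_lt_one hVt]
    exact Real.rpow_lt_rpow hd0.le h1 (by positivity)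
  calc |(1 + (m:ℝ)) * (-(2/(m:ℝ)) + Dcoef m b / ((m:ℝ)+1) * d ^ ((m:ℝ)/2))|
        * |d ^ (1 + (m:ℝ)/2) / t ^ (1 + (m:ℝ)/2)|
      < 1 * 1 := by
        apply mul_lt_mul'' hG hQ (abs_nonneg _) (abs_nonneg _)
    _ = 1 := by ring

lemma level_eq (h : Facts m b d) :
    {t : ℝ | 0 ≤ t ∧ 1 ≤ |Lam m (fsp m b d) t|} = Ioc 1 d := by
  ext t
  simp only [mem_setOf_eq, mem_Ioc]
  constructor
  · rintro ⟨ht0, ht1⟩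
    rcases le_or_gt t 1 with hle | hgt
    · rw [Lam_zero h ht0 hle] at ht1
      norm_num at ht1
    rcases le_or_gt t d with hled | hgtd
    · exact ⟨hgt, hled⟩
    · exact absurd ht1 (not_le.mpr (Lam_tail h hgtd))
  · rintro ⟨h1, h2⟩
    refine ⟨by linarith, ?_⟩
    rcases le_or_gt t b with htb | htb
    · rw [Lam_one h h1 htb]; norm_num
    · rw [Lam_two h htb h2]; norm_num

lemma volume_level (h : Facts m b d) :
    (volume {t : ℝ | 0 ≤ t ∧ 1 ≤ |Lam m (fsp m b d) t|}).toReal = d - 1 := by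
  rw [level_eq h, Real.volume_Ioc, ENNReal.toReal_ofReal (by linarith [h.hd1])]

lemma abs_fsp_one (h : Facts m b d) {t : ℝ} (h1 : 1 < t) (h2 : t ≤ b) :
    |fsp m b d t| = -((2 + (m:ℝ))/(m:ℝ)) + (2*(1+(m:ℝ))/(m:ℝ)) * t ^ ((m:ℝ)/2) := by
  have hM0 := h.hM0
  have h1p : (1:ℝ) ≤ t ^ ((m:ℝ)/2) := Real.one_le_rpow h1.le (by positivity)
  have hcm : (0:ℝ) ≤ 2*(1+(m:ℝ))/(m:ℝ) := by positivity
  have h3 := mul_le_mul_of_nonneg_left h1p hcm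
  rw [mul_one] at h3
  have h4 : (2+(m:ℝ))/(m:ℝ) ≤ 2*(1+(m:ℝ))/(m:ℝ) := by gcongr <;> linarith
  rw [fsp_one m b d h1 h2, abs_of_nonpos (by linarith)]
  ring

lemma abs_fsp_mid (h : Facts m b d) {t : ℝ} (h1 : b < t) (h2 : t ≤ t0 m b) :
    |fsp m b d t| = (2 + (m:ℝ))/(m:ℝ) - Dcoef m b * t ^ ((m:ℝ)/2) := by
  have hM0 := h.hM0
  have ht0 : (0:ℝ) < t := lt_trans h.hb0 h1
  have hr : t ^ ((m:ℝ)/2) ≤ (t0 m b) ^ ((m:ℝ)/2) := Real.rpow_le_rpow ht0.le h2 (by positivity)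
  have h3 := mul_le_mul_of_nonneg_left hr h.hD.le
  rw [h.D_t0] at h3
  rw [fsp_two m b d h.hb.le h1 (le_trans h2 h.t0_lt_d.le), abs_of_nonpos (by
    rw [neg_div]; linarith)]
  ring

lemma abs_fsp_hi (h : Facts m b d) {t : ℝ} (h1 : t0 m b < t) (h2 : t ≤ d) :
    |fsp m b d t| = -((2 + (m:ℝ))/(m:ℝ)) + Dcoef m b * t ^ ((m:ℝ)/2) := by
  have hM0 := h.hM0
  have hr : (t0 m b) ^ ((m:ℝ)/2) ≤ t ^ ((m:ℝ)/2) :=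
    Real.rpow_le_rpow h.t0_pos.le h1.le (by positivity)
  have h3 := mul_le_mul_of_nonneg_left hr h.hD.le
  rw [h.D_t0] at h3
  rw [fsp_two m b d h.hb.le (lt_of_le_of_lt h.b_lt_t0.le h1) h2, abs_of_nonneg (by
    rw [neg_div]; linarith)]
  ring

lemma IIabs1 (h : Facts m b d) : IntervalIntegrable (fun t => |fsp m b d t|) volume 1 b :=
  intervalIntegrable_congr_Ioc h.hb.le
    ((continuous_one_rpow (-((2+(m:ℝ))/(m:ℝ))) (2*(1+(m:ℝ))/(m:ℝ)) ((m:ℝ)/2)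
      (by positivity)).intervalIntegrable 1 b)
    (fun t ht => (abs_fsp_one h ht.1 ht.2).symm)

lemma IIabs2 (h : Facts m b d) : IntervalIntegrable (fun t => |fsp m b d t|) volume b (t0 m b) :=
  intervalIntegrable_congr_Ioc h.b_lt_t0.le
    ((continuous_one_rpow ((2+(m:ℝ))/(m:ℝ)) (-(Dcoef m b)) ((m:ℝ)/2)
      (by positivity)).intervalIntegrable _ _)
    (fun t ht => by rw [abs_fsp_mid h ht.1 ht.2]; ring)

lemma IIabs3 (h : Facts m b d) : IntervalIntegrable (fun t => |fsp m b d t|) volume (t0 m b) d :=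
  intervalIntegrable_congr_Ioc h.t0_lt_d.le
    ((continuous_one_rpow (-((2+(m:ℝ))/(m:ℝ))) (Dcoef m b) ((m:ℝ)/2)
      (by positivity)).intervalIntegrable _ _)
    (fun t ht => (abs_fsp_hi h ht.1 ht.2).symm)

lemma J1_eq (h : Facts m b d) :
    ∫ t in (1:ℝ)..b, |fsp m b d t|
      = -((2+(m:ℝ))/(m:ℝ))*(b-1)
        + (2*(1+(m:ℝ))/(m:ℝ))*((b ^ ((m:ℝ)/2+1) - 1)/((m:ℝ)/2+1)) := by
  have hM0 := h.hM0
  rw [integral_congr_Ioc h.hb.le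
      (g := fun t => -((2+(m:ℝ))/(m:ℝ)) + (2*(1+(m:ℝ))/(m:ℝ)) * t^((m:ℝ)/2))
      (fun t ht => abs_fsp_one h ht.1 ht.2),
    integral_one_rpow _ _ _ _ _ (by positivity), Real.one_rpow]

lemma J2_eq (h : Facts m b d) :
    ∫ t in b..(t0 m b), |fsp m b d t|
      = ((2+(m:ℝ))/(m:ℝ))*(t0 m b - b)
        + (-(Dcoef m b))*(((t0 m b) ^ ((m:ℝ)/2+1) - b ^ ((m:ℝ)/2+1))/((m:ℝ)/2+1)) := by
  have hM0 := h.hM0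
  rw [integral_congr_Ioc h.b_lt_t0.le
      (g := fun t => (2+(m:ℝ))/(m:ℝ) + (-(Dcoef m b)) * t^((m:ℝ)/2))
      (fun t ht => by rw [abs_fsp_mid h ht.1 ht.2]; ring),
    integral_one_rpow _ _ _ _ _ (by positivity)]

lemma J3_eq (h : Facts m b d) :
    ∫ t in (t0 m b)..d, |fsp m b d t|
      = (-((2+(m:ℝ))/(m:ℝ)))*(d - t0 m b)
        + (Dcoef m b)*((d ^ ((m:ℝ)/2+1) - (t0 m b) ^ ((m:ℝ)/2+1))/((m:ℝ)/2+1)) := by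
  have hM0 := h.hM0
  rw [integral_congr_Ioc h.t0_lt_d.le
      (g := fun t => -((2+(m:ℝ))/(m:ℝ)) + (Dcoef m b) * t^((m:ℝ)/2))
      (fun t ht => abs_fsp_hi h ht.1 ht.2),
    integral_one_rpow _ _ _ _ _ (by positivity)]

lemma abs_split (h : Facts m b d) :
    ∫ t in Ici (0:ℝ), |fsp m b d t|
      = (∫ t in (1:ℝ)..b, |fsp m b d t|) + (∫ t in b..(t0 m b), |fsp m b d t|)
        + (∫ t in (t0 m b)..d, |fsp m b d t|) := by
  have h1d : (1:ℝ) ≤ d := h.hd1.le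
  have e0 : ∫ t in Ici (0:ℝ), |fsp m b d t| = ∫ t in Ioc (1:ℝ) d, |fsp m b d t| := by
    apply setIntegral_eq_of_subset_of_forall_diff_eq_zero measurableSet_Ici
      (fun x hx => le_trans zero_le_one hx.1.le)
    intro x hx
    obtain ⟨hx0, hx1⟩ := hx
    rcases le_or_gt x 1 with hle | hgt
    · rw [fsp_zero_left m b d h.hb.le hle, abs_zero]
    · have : d < x := by
        by_contra hc
        push_neg at hc
        exact hx1 ⟨hgt, hc⟩
      rw [fsp_zero_right m b d h.hbd.le this, abs_zero]
  rw [e0, ← intervalIntegral.integral_of_le h1d,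
    ← intervalIntegral.integral_add_adjacent_intervals
      ((IIabs1 h).trans (IIabs2 h)) (IIabs3 h),
    ← intervalIntegral.integral_add_adjacent_intervals (IIabs1 h) (IIabs2 h)]

set_option maxHeartbeats 2000000 in
lemma integral_abs_eq (h : Facts m b d) :
    ∫ t in Ici (0:ℝ), |fsp m b d t| = denom m b d := by
  have hM0 := h.hM0
  have hb0 := h.hb0
  have hd0 := h.hd0
  have hT0 := h.t0_pos
  rw [abs_split h, J1_eq h, J2_eq h, J3_eq h]
  unfold denom Dcoef
  rw [Real.rpow_add_one hb0.ne' ((m:ℝ)/2), Real.rpow_add_one hT0.ne' ((m:ℝ)/2),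
    Real.rpow_add_one hd0.ne' ((m:ℝ)/2),
    show (1:ℝ)+(m:ℝ)/2 = (m:ℝ)/2+1 by ring,
    Real.rpow_add_one hd0.ne' ((m:ℝ)/2),
    h.t0_rpow,
    show -(m:ℝ)/2 = -((m:ℝ)/2) by ring, Real.rpow_neg hb0.le]
  have hZ0 : (0:ℝ) < 2 * (b ^ ((m:ℝ)/2))⁻¹ - 1 := by
    have := h.hZ
    rwa [show -(m:ℝ)/2 = -((m:ℝ)/2) by ring, Real.rpow_neg hb0.le] at this
  have hBne : b ^ ((m:ℝ)/2) ≠ 0 := (Real.rpow_pos_of_pos hb0 _).ne'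
  have hZne : 2 * (b ^ ((m:ℝ)/2))⁻¹ - 1 ≠ 0 := hZ0.ne'
  have e1 : (m:ℝ)/2 + 1 ≠ 0 := by positivity
  have e2 : (2:ℝ) + (m:ℝ) ≠ 0 := by linarith [h.hM]
  have e3 : (1:ℝ) + (m:ℝ) ≠ 0 := by linarith [h.hM]
  set B := b ^ ((m:ℝ)/2) with hB
  set Y := d ^ ((m:ℝ)/2) with hY
  have hBpos : 0 < B := Real.rpow_pos_of_pos hb0 _
  have h2B : 0 < 2 - B := by
    have h5 := mul_pos hZ0 hBpos
    have e : (2*B⁻¹-1)*B = 2 - B := by field_simp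
    rw [e] at h5
    exact h5
  have h2Bne : (2:ℝ) - B ≠ 0 := h2B.ne'
  field_simp
  ring

lemma ratio_eq (h : Facts m b d) : ratio m b d = (d - 1) / denom m b d := by
  unfold ratio
  rw [volume_level h, integral_abs_eq h]

lemma ratio_nonneg (m : ℕ) (b d : ℝ) : 0 ≤ ratio m b d :=
  div_nonneg ENNReal.toReal_nonneg (integral_nonneg (fun t => abs_nonneg _))

lemma J_mono (h : Facts m b d) {u v : ℝ} (huv : u ≤ v) {g : ℝ → ℝ}
    (hg : IntervalIntegrable g volume u v)
    (hfi : IntervalIntegrable (fun t => |fsp m b d t|) volume u v)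
    (hpt : ∀ t ∈ Ioc u v, g t ≤ |fsp m b d t|) :
    ∫ t in u..v, g t ≤ ∫ t in u..v, |fsp m b d t| := by
  rw [intervalIntegral.integral_of_le huv, intervalIntegral.integral_of_le huv]
  rw [intervalIntegrable_iff, uIoc_of_le huv] at hg hfi
  exact setIntegral_mono_on hg hfi measurableSet_Ioc hpt

lemma J1_ge (h : Facts m b d) : b - 1 ≤ ∫ t in (1:ℝ)..b, |fsp m b d t| := by
  have hM0 := h.hM0
  have key : ∫ t in (1:ℝ)..b, (1:ℝ) ≤ ∫ t in (1:ℝ)..b, |fsp m b d t| := by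
    apply J_mono h h.hb.le intervalIntegrable_const (IIabs1 h)
    intro t ht
    rw [abs_fsp_one h ht.1 ht.2]
    have h1p : (1:ℝ) ≤ t ^ ((m:ℝ)/2) := Real.one_le_rpow ht.1.le (by positivity)
    have hcm : (0:ℝ) ≤ 2*(1+(m:ℝ))/(m:ℝ) := by positivity
    have h3 := mul_le_mul_of_nonneg_left h1p hcm
    rw [mul_one] at h3
    have h4 : (2+(m:ℝ))/(m:ℝ) + 1 ≤ 2*(1+(m:ℝ))/(m:ℝ) := by
      rw [div_add' _ _ _ hM0.ne']
      gcongr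
      linarith
    linarith
  rwa [integral_one] at key

lemma J2_nonneg (h : Facts m b d) : 0 ≤ ∫ t in b..(t0 m b), |fsp m b d t| :=
  intervalIntegral.integral_nonneg h.b_lt_t0.le (fun t _ => abs_nonneg _)

lemma J3_nonneg (h : Facts m b d) : 0 ≤ ∫ t in (t0 m b)..d, |fsp m b d t| :=
  intervalIntegral.integral_nonneg h.t0_lt_d.le (fun t _ => abs_nonneg _)

lemma J2_ge0 (h : Facts m b d) :
    ((2+(m:ℝ))/(m:ℝ))*(t0 m b - b) - 2*(t0 m b)/(m:ℝ) ≤ ∫ t in b..(t0 m b), |fsp m b d t| := by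
  have hM0 := h.hM0
  rw [J2_eq h, Real.rpow_add_one h.t0_pos.ne' ((m:ℝ)/2), Real.rpow_add_one h.hb0.ne' ((m:ℝ)/2)]
  have e1 : (0:ℝ) < (m:ℝ)/2 + 1 := by positivity
  have h6 : Dcoef m b * ((t0 m b)^((m:ℝ)/2) * t0 m b) = ((2+(m:ℝ))/(m:ℝ)) * t0 m b := by
    rw [← mul_assoc, h.D_t0]
  have h7 : 0 ≤ Dcoef m b * (b^((m:ℝ)/2) * b) :=
    mul_nonneg h.hD.le (mul_nonneg (Real.rpow_pos_of_pos h.hb0 _).le h.hb0.le)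
  have h10 : 2*(t0 m b)/(m:ℝ) = ((2+(m:ℝ))/(m:ℝ) * t0 m b)/((m:ℝ)/2+1) := by
    field_simp
    ring
  have key : (-(Dcoef m b))*(((t0 m b)^((m:ℝ)/2)*(t0 m b) - b^((m:ℝ)/2)*b)/((m:ℝ)/2+1))
      = -(2*(t0 m b)/(m:ℝ)) + (Dcoef m b * (b^((m:ℝ)/2)*b))/((m:ℝ)/2+1) := by
    rw [h10, ← h6]
    ring
  rw [key]
  have h11 : 0 ≤ Dcoef m b * (b^((m:ℝ)/2)*b) / ((m:ℝ)/2+1) := div_nonneg h7 e1.le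
  linarith

lemma J2_ge1 (h : Facts m b d) :
    t0 m b - ((2+(m:ℝ))/(m:ℝ))*b ≤ ∫ t in b..(t0 m b), |fsp m b d t| := by
  have hM0 := h.hM0
  have key := J2_ge0 h
  have e : ((2+(m:ℝ))/(m:ℝ))*(t0 m b - b) - 2*(t0 m b)/(m:ℝ)
      = t0 m b - ((2+(m:ℝ))/(m:ℝ))*b := by
    field_simp
    ring
  linarith [e ▸ key]

lemma J2_half (h : Facts m b d) (hc : 4*(t0 m b) ≤ (2+(m:ℝ))*(t0 m b - b)) :
    (t0 m b - b)/2 ≤ ∫ t in b..(t0 m b), |fsp m b d t| := by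
  have hM0 := h.hM0
  have key := J2_ge0 h
  have hTb : 0 ≤ t0 m b - b := by linarith [h.b_lt_t0]
  have e1 : 2*(t0 m b)/(m:ℝ) ≤ ((2+(m:ℝ))/(2*(m:ℝ)))*(t0 m b - b) := by
    rw [div_mul_eq_mul_div, div_le_div_iff₀ hM0 (by positivity)]
    nlinarith [mul_le_mul_of_nonneg_right hc hM0.le]
  have e2 : ((2+(m:ℝ))/(m:ℝ))*(t0 m b - b) - ((2+(m:ℝ))/(2*(m:ℝ)))*(t0 m b - b)
      = ((2+(m:ℝ))/(2*(m:ℝ)))*(t0 m b - b) := by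
    field_simp
    ring
  have e3 : (t0 m b - b)/2 ≤ ((2+(m:ℝ))/(2*(m:ℝ)))*(t0 m b - b) := by
    rw [div_mul_eq_mul_div, div_le_div_iff₀ (by norm_num : (0:ℝ) < 2) (by positivity)]
    nlinarith [hTb]
  linarith

lemma J3_quad (h : Facts m b d) :
    ((2+(m:ℝ))/(2*(t0 m b)))*((d - t0 m b)^2/2) ≤ ∫ t in (t0 m b)..d, |fsp m b d t| := by
  have hM0 := h.hM0
  have hM2 := h.hM
  have hT0 := h.t0_pos
  have hP1 : (1:ℝ) ≤ (m:ℝ)/2 := by linarith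
  have hgc : Continuous (fun t : ℝ => ((2+(m:ℝ))/(2*(t0 m b)))*(t - t0 m b)) := by
    fun_prop
  have key : ∫ t in (t0 m b)..d, (((2+(m:ℝ))/(2*(t0 m b)))*(t - t0 m b))
      ≤ ∫ t in (t0 m b)..d, |fsp m b d t| := by
    apply J_mono h h.t0_lt_d.le (hgc.intervalIntegrable _ _) (IIabs3 h)
    intro t ht
    rw [abs_fsp_hi h ht.1 ht.2]
    have htpos : (0:ℝ) < t := lt_trans hT0 ht.1
    have hu : (0:ℝ) ≤ (t - t0 m b)/(t0 m b) := div_nonneg (by linarith [ht.1]) hT0.le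
    have hber := one_add_mul_self_le_rpow_one_add
      (by linarith : (-1:ℝ) ≤ (t - t0 m b)/(t0 m b)) hP1
    have h1u : (1:ℝ) + (t - t0 m b)/(t0 m b) = t/(t0 m b) := by field_simp; ring
    rw [h1u, Real.div_rpow htpos.le hT0.le] at hber
    have hTP : (0:ℝ) < (t0 m b) ^ ((m:ℝ)/2) := Real.rpow_pos_of_pos hT0 _
    have s1 : (t0 m b)^((m:ℝ)/2) * (1 + ((m:ℝ)/2)*((t - t0 m b)/(t0 m b))) ≤ t^((m:ℝ)/2) := by
      calc (t0 m b)^((m:ℝ)/2) * (1 + ((m:ℝ)/2)*((t - t0 m b)/(t0 m b)))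
          ≤ (t0 m b)^((m:ℝ)/2) * (t^((m:ℝ)/2)/(t0 m b)^((m:ℝ)/2)) :=
            mul_le_mul_of_nonneg_left hber hTP.le
        _ = t^((m:ℝ)/2) := by field_simp
    have s2 := mul_le_mul_of_nonneg_left s1 h.hD.le
    rw [show Dcoef m b * ((t0 m b)^((m:ℝ)/2) * (1 + ((m:ℝ)/2)*((t - t0 m b)/(t0 m b))))
        = (Dcoef m b * (t0 m b)^((m:ℝ)/2)) * (1 + ((m:ℝ)/2)*((t - t0 m b)/(t0 m b))) by ring,
      h.D_t0] at s2
    have s3 : ((2+(m:ℝ))/(m:ℝ))*(1 + ((m:ℝ)/2)*((t - t0 m b)/(t0 m b)))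
        = (2+(m:ℝ))/(m:ℝ) + ((2+(m:ℝ))/(2*(t0 m b)))*(t - t0 m b) := by
      field_simp
    rw [s3] at s2
    linarith
  calc ((2+(m:ℝ))/(2*(t0 m b)))*((d - t0 m b)^2/2)
      = ∫ t in (t0 m b)..d, (((2+(m:ℝ))/(2*(t0 m b)))*(t - t0 m b)) := by
        rw [integral_congr_Ioc h.t0_lt_d.le
            (g := fun t => (-(((2+(m:ℝ))/(2*(t0 m b)))*(t0 m b)))
              + ((2+(m:ℝ))/(2*(t0 m b)))*t^(1:ℝ)) (fun t ht => by simp only [Real.rpow_one]; ring),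
          integral_one_rpow _ _ _ _ _ zero_le_one,
          show ((1:ℝ)+1) = ((2:ℕ):ℝ) by norm_num, Real.rpow_natCast, Real.rpow_natCast]
        ring
    _ ≤ _ := key

lemma bP_lt_two (h : Facts m b d) : b ^ ((m:ℝ)/2) < 2 := by
  have hZ := h.hZ
  rw [show -(m:ℝ)/2 = -((m:ℝ)/2) by ring, Real.rpow_neg h.hb0.le] at hZ
  have hBpos : 0 < b ^ ((m:ℝ)/2) := Real.rpow_pos_of_pos h.hb0 _
  have h5 := mul_pos hZ hBpos
  have e : (2*(b ^ ((m:ℝ)/2))⁻¹-1)*(b ^ ((m:ℝ)/2)) = 2 - b ^ ((m:ℝ)/2) := by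
    field_simp
  rw [e] at h5
  linarith

lemma b_le_two (h : Facts m b d) : b ≤ 2 := by
  have hM2 := h.hM
  have h1 : b = b^(1:ℝ) := (Real.rpow_one b).symm
  have h2 : b^(1:ℝ) ≤ b^((m:ℝ)/2) :=
    (Real.rpow_le_rpow_left_iff h.hb).mpr (by linarith)
  have h3 := bP_lt_two h
  rw [← h1] at h2
  linarith

lemma inv_cancel_aux : ∀ B : ℝ, B ≠ 0 → (2*B⁻¹ - 1)*B = 2 - B := by
  intro B hB
  field_simp

lemma DB_eq (h : Facts m b d) :
    Dcoef m b * b ^ ((m:ℝ)/2) = (2*(1+(m:ℝ))/(m:ℝ))*(2 - b ^ ((m:ℝ)/2)) := by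
  have hBne : b ^ ((m:ℝ)/2) ≠ 0 := (Real.rpow_pos_of_pos h.hb0 _).ne'
  unfold Dcoef
  rw [show -(m:ℝ)/2 = -((m:ℝ)/2) by ring, Real.rpow_neg h.hb0.le, mul_assoc,
    inv_cancel_aux _ hBne]

lemma B_gt (h : Facts m b d) : (3*(m:ℝ)+2)/(2*(m:ℝ)+2) < b ^ ((m:ℝ)/2) := by
  have hM0 := h.hM0
  have hcb := h.hcb
  rw [neg_div] at hcb
  have hlt : Dcoef m b * b ^ ((m:ℝ)/2) < (2+(m:ℝ))/(m:ℝ) := by linarith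
  rw [DB_eq h] at hlt
  set B := b ^ ((m:ℝ)/2) with hBdef
  have h2 : 2*(1+(m:ℝ))*(2 - B) < 2+(m:ℝ) := by
    have h4 := mul_lt_mul_of_pos_right hlt hM0
    have e1 : (2*(1+(m:ℝ))/(m:ℝ))*(2-B)*(m:ℝ) = 2*(1+(m:ℝ))*(2-B) := by
      field_simp
    have e2 : ((2+(m:ℝ))/(m:ℝ))*(m:ℝ) = 2+(m:ℝ) := by field_simp
    rw [e1, e2] at h4
    exact h4
  rw [div_lt_iff₀ (by linarith : (0:ℝ) < 2*(m:ℝ)+2)]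
  nlinarith

lemma b1_ge (h : Facts m b d) : 2/(3*(m:ℝ)+2) ≤ b - 1 := by
  have hM0 := h.hM0
  have hBpos : 0 < b ^ ((m:ℝ)/2) := Real.rpow_pos_of_pos h.hb0 _
  have l1 : Real.log b ≤ b - 1 := Real.log_le_sub_one_of_pos h.hb0
  have l2 : Real.log (b^((m:ℝ)/2)) = ((m:ℝ)/2) * Real.log b := Real.log_rpow h.hb0 _
  have l3 : 1 - (b^((m:ℝ)/2))⁻¹ ≤ Real.log (b^((m:ℝ)/2)) := by
    have h4 := Real.log_le_sub_one_of_pos (inv_pos.mpr hBpos)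
    rw [Real.log_inv] at h4
    linarith
  have l4 : (b^((m:ℝ)/2))⁻¹ ≤ (2*(m:ℝ)+2)/(3*(m:ℝ)+2) := by
    have h5 : (0:ℝ) < (3*(m:ℝ)+2)/(2*(m:ℝ)+2) := by positivity
    have h6 := one_div_le_one_div_of_le h5 (B_gt h).le
    rw [one_div, one_div_div] at h6
    exact h6
  have l5 : (m:ℝ)/(3*(m:ℝ)+2) ≤ Real.log (b^((m:ℝ)/2)) := by
    have e : 1 - (2*(m:ℝ)+2)/(3*(m:ℝ)+2) = (m:ℝ)/(3*(m:ℝ)+2) := by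
      field_simp
      ring
    linarith
  rw [l2] at l5
  have l6 : 2/(3*(m:ℝ)+2) ≤ Real.log b := by
    have h7 := mul_le_mul_of_nonneg_left l5 (by positivity : (0:ℝ) ≤ 2/(m:ℝ))
    have e1 : 2/(m:ℝ) * ((m:ℝ)/(3*(m:ℝ)+2)) = 2/(3*(m:ℝ)+2) := by
      rw [div_mul_div_comm, mul_comm (m:ℝ) _, mul_div_mul_right _ _ hM0.ne']
    have e2 : 2/(m:ℝ) * (((m:ℝ)/2) * Real.log b) = Real.log b := by
      field_simp
    rw [e1, e2] at h7
    exact h7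
  linarith

lemma d_le_3T (h : Facts m b d) : d ≤ 3 * t0 m b := by
  have hM0 := h.hM0
  have hM2 := h.hM
  have hT0 := h.t0_pos
  by_contra hcon
  push_neg at hcon
  have h1 : (3 * t0 m b) ^ ((m:ℝ)/2) ≤ d ^ ((m:ℝ)/2) :=
    Real.rpow_le_rpow (by positivity) hcon.le (by positivity)
  rw [Real.mul_rpow (by norm_num) hT0.le] at h1
  have h2 : (3:ℝ) = (3:ℝ)^(1:ℝ) := (Real.rpow_one 3).symm
  have h3 : (3:ℝ)^(1:ℝ) ≤ (3:ℝ)^((m:ℝ)/2) :=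
    (Real.rpow_le_rpow_left_iff (by norm_num : (1:ℝ) < 3)).mpr (by linarith)
  have h4 : 3 * (t0 m b) ^ ((m:ℝ)/2) ≤ (3:ℝ)^((m:ℝ)/2) * (t0 m b) ^ ((m:ℝ)/2) := by
    have := Real.rpow_pos_of_pos hT0 ((m:ℝ)/2)
    nlinarith [h2 ▸ h3]
  have h5 : Dcoef m b * (3 * (t0 m b) ^ ((m:ℝ)/2)) ≤ Dcoef m b * (d ^ ((m:ℝ)/2)) :=
    mul_le_mul_of_nonneg_left (by linarith) h.hD.le
  rw [show Dcoef m b * (3 * (t0 m b) ^ ((m:ℝ)/2))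
    = 3 * (Dcoef m b * (t0 m b) ^ ((m:ℝ)/2)) by ring, h.D_t0] at h5
  have hcd2 := h.hcd2
  rw [neg_div] at hcd2
  have h6 : (1:ℝ) ≤ (2+(m:ℝ))/(m:ℝ) := by
    rw [le_div_iff₀ hM0]
    linarith
  linarith

lemma ratio_le_100 (h : Facts m b d) (h10 : (10:ℝ) ≤ (m:ℝ)) : ratio m b d ≤ 100 := by
  have hM0 := h.hM0
  have hb1 := h.hb
  have hbT := h.b_lt_t0
  have hTd := h.t0_lt_d
  have hT0 := h.t0_pos
  have hb2 := b_le_two h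
  have h3T := d_le_3T h
  have he := b1_ge h
  have heM : 2 ≤ (b-1)*(3*(m:ℝ)+2) := by
    rw [div_le_iff₀ (by linarith : (0:ℝ) < 3*(m:ℝ)+2)] at he
    linarith
  have hsum : denom m b d = (∫ t in (1:ℝ)..b, |fsp m b d t|)
      + (∫ t in b..(t0 m b), |fsp m b d t|) + (∫ t in (t0 m b)..d, |fsp m b d t|) := by
    rw [← integral_abs_eq h, abs_split h]
  set J1 := ∫ t in (1:ℝ)..b, |fsp m b d t| with hJ1def
  set J2 := ∫ t in b..(t0 m b), |fsp m b d t| with hJ2def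
  set J3 := ∫ t in (t0 m b)..d, |fsp m b d t| with hJ3def
  have hJ1 : b - 1 ≤ J1 := J1_ge h
  have hJ2 : 0 ≤ J2 := J2_nonneg h
  have hJ3 : 0 ≤ J3 := J3_nonneg h
  have hden_pos : 0 < denom m b d := by rw [hsum]; nlinarith
  rw [ratio_eq h, div_le_iff₀ hden_pos, hsum]
  rcases lt_or_ge 4 (t0 m b) with hT4 | hT4
  · -- large t0 case
    have hJ2b := J2_ge1 h
    have hcb2 : ((2+(m:ℝ))/(m:ℝ))*b ≤ b + 2/5 := by
      have e : ((2+(m:ℝ))/(m:ℝ))*b = b + 2*b/(m:ℝ) := by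
        field_simp
        ring
      have e2 : 2*b/(m:ℝ) ≤ 2/5 := by
        rw [div_le_div_iff₀ hM0 (by norm_num : (0:ℝ) < 5)]
        nlinarith
      linarith [e ▸ le_refl (((2+(m:ℝ))/(m:ℝ))*b)]
    linarith
  · -- small t0 case
    have hN2 : t0 m b - b ≤ 26*(J1 + J2 + J3) := by
      rcases le_or_gt (4*(t0 m b)) ((2+(m:ℝ))*(t0 m b - b)) with hc | hc
      · have h5 := J2_half h hc
        linarith
      · have h16 : (2+(m:ℝ))*(t0 m b - b) ≤ 16 := by linarith
        have k3 : t0 m b - b ≤ 26*(b-1) := by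
          nlinarith [h16, heM, mul_pos (show (0:ℝ) < 2+(m:ℝ) by linarith)
            (show (0:ℝ) < 3*(m:ℝ)+2 by linarith), hbT, hb1]
        linarith
    have hN3 : d - t0 m b ≤ 26*(J1 + J2 + J3) := by
      rcases le_or_gt ((m:ℝ)*(d - t0 m b)) 16 with hc | hc
      · have k3 : d - t0 m b ≤ 26*(b-1) := by
          nlinarith [hc, heM, mul_pos hM0 (show (0:ℝ) < 3*(m:ℝ)+2 by linarith), hTd, hb1]
        linarith
      · have hq := J3_quad h
        have hN3pos : 0 < d - t0 m b := by nlinarith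
        have key : d - t0 m b ≤ ((2+(m:ℝ))/(2*(t0 m b)))*((d - t0 m b)^2/2) := by
          rw [div_mul_eq_mul_div, le_div_iff₀ (by positivity : (0:ℝ) < 2*(t0 m b))]
          nlinarith [mul_lt_mul_of_pos_right hc hN3pos]
        linarith
    linarith

end Main

section Limit

open Filter

lemma exp_rpow_aux (u v : ℝ) : (Real.exp u) ^ v = Real.exp (u*v) := by
  rw [Real.rpow_def_of_pos (Real.exp_pos u), Real.log_exp]

lemma tendsto_natInv : Tendsto (fun n : ℕ => ((n:ℝ))⁻¹) atTop (nhds 0) :=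
  tendsto_inv_atTop_zero.comp tendsto_natCast_atTop_atTop

lemma tendsto_comp_inv {G : ℝ → ℝ} {L : ℝ} (hG : ContinuousAt G 0) (hG0 : G 0 = L)
    {f : ℕ → ℝ} (hf : ∀ᶠ n : ℕ in atTop, f n = G ((n:ℝ)⁻¹)) :
    Tendsto f atTop (nhds L) := by
  have h2 := hG.tendsto.comp tendsto_natInv
  rw [hG0] at h2
  exact Filter.Tendsto.congr' (hf.mono fun n h => h.symm) h2

lemma tendsto_scaled_exp {θ : ℕ → ℝ} {θ₀ : ℝ} (h : Tendsto θ atTop (nhds θ₀))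
    (h0 : ∀ n, 0 ≤ θ n) :
    Tendsto (fun n : ℕ => ((n:ℝ)/2) * (Real.exp (2*θ n/(n:ℝ)) - 1)) atTop (nhds θ₀) := by
  have hlim0 : Tendsto (fun n : ℕ => 2*θ n/(n:ℝ)) atTop (nhds 0) := by
    have h2 : Tendsto (fun n : ℕ => (2*θ n)*((n:ℝ))⁻¹) atTop (nhds ((2*θ₀)*0)) :=
      Tendsto.mul (h.const_mul 2) tendsto_natInv
    rw [mul_zero] at h2
    exact h2.congr (fun n => by rw [div_eq_mul_inv])
  have hhalf : ∀ᶠ n : ℕ in atTop, 2*θ n/(n:ℝ) ≤ 1/2 :=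
    hlim0.eventually_le_const (by norm_num : (0:ℝ) < 1/2)
  have hupper : Tendsto (fun n : ℕ => θ n / (1 - 2*θ n/(n:ℝ))) atTop (nhds θ₀) := by
    have hden : Tendsto (fun n : ℕ => 1 - 2*θ n/(n:ℝ)) atTop (nhds 1) := by
      have h9 : Tendsto (fun _ : ℕ => (1:ℝ)) atTop (nhds 1) := tendsto_const_nhds
      have := h9.sub hlim0
      simpa using this
    have := h.div hden one_ne_zero
    rw [div_one] at this; exact this
  apply tendsto_of_tendsto_of_tendsto_of_le_of_le' h hupper
  · -- θ n ≤ middle eventually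
    filter_upwards [eventually_ge_atTop 1] with n hn
    have hn0 : (0:ℝ) < (n:ℝ) := by exact_mod_cast hn
    have hexp := Real.add_one_le_exp (2*θ n/(n:ℝ))
    have e : ((n:ℝ)/2)*(2*θ n/(n:ℝ)) = θ n := by field_simp
    nlinarith [hexp, hn0]
  · -- middle ≤ upper eventually
    filter_upwards [eventually_ge_atTop 1, hhalf] with n hn hh
    have hn0 : (0:ℝ) < (n:ℝ) := by exact_mod_cast hn
    set u := 2*θ n/(n:ℝ) with hu
    have h1u : (0:ℝ) < 1 - u := by linarith
    have hexp2 := Real.add_one_le_exp (-u)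
    rw [Real.exp_neg] at hexp2
    have hepos := Real.exp_pos u
    have h3 : (1 - u) * Real.exp u ≤ 1 := by
      have h4 := mul_le_mul_of_nonneg_right hexp2 hepos.le
      rw [inv_mul_cancel₀ hepos.ne'] at h4
      nlinarith [h4]
    have h5 : Real.exp u - 1 ≤ u/(1 - u) := by
      rw [le_div_iff₀ h1u]
      nlinarith [h3]
    have e : ((n:ℝ)/2)*u = θ n := by rw [hu]; field_simp
    calc ((n:ℝ)/2)*(Real.exp u - 1)
        ≤ ((n:ℝ)/2)*(u/(1-u)) := mul_le_mul_of_nonneg_left h5 (by positivity)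
      _ = θ n/(1-u) := by rw [← e]; ring

lemma exp_pow_half (x : ℝ) {n : ℕ} (hn : 1 ≤ n) :
    (Real.exp (2*x/(n:ℝ))) ^ ((n:ℝ)/2) = Real.exp x := by
  have hn0 : (0:ℝ) < (n:ℝ) := by exact_mod_cast hn
  rw [exp_rpow_aux]
  congr 1
  field_simp

lemma exp_pow_half_neg (x : ℝ) {n : ℕ} (hn : 1 ≤ n) :
    (Real.exp (2*x/(n:ℝ))) ^ (-(n:ℝ)/2) = Real.exp (-x) := by
  have hn0 : (0:ℝ) < (n:ℝ) := by exact_mod_cast hn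
  rw [exp_rpow_aux]
  congr 1
  field_simp

lemma two_exp_neg_eq (x : ℝ) : (2*Real.exp (-x) - 1)*Real.exp x = 2 - Real.exp x := by
  rw [Real.exp_neg]
  exact inv_cancel_aux _ (Real.exp_ne_zero x)

lemma mem_Sset_exp (x : ℝ) (An : ℝ) (n : ℕ) (hn : 1 ≤ n)
    (hex2 : Real.exp x < 2) (hex32 : 3/2 ≤ Real.exp x) (hx0 : 0 < x)
    (hAn1 : 1 < An)
    (hgt : (2+(n:ℝ)) < (1+(n:ℝ))*An) (hlt : (1+(n:ℝ))*An < 3*(n:ℝ)+2) :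
    (Real.exp (2*x/(n:ℝ)),
      Real.exp (2*(x + Real.log An - Real.log (2*(2 - Real.exp x)))/(n:ℝ))) ∈ Sset n := by
  have hn0 : (0:ℝ) < (n:ℝ) := by exact_mod_cast hn
  have ha : (0:ℝ) < 2*(2 - Real.exp x) := by linarith
  have ha1 : 2*(2 - Real.exp x) ≤ 1 := by linarith
  have h2mx : (0:ℝ) < 2 - Real.exp x := by linarith
  have h5 := two_exp_neg_eq x
  have h2e : 0 < 2*Real.exp (-x) - 1 := by nlinarith [Real.exp_pos x]
  have hbP := exp_pow_half x hn
  have hbPn := exp_pow_half_neg x hn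
  have hdP : (Real.exp (2*(x + Real.log An - Real.log (2*(2 - Real.exp x)))/(n:ℝ)))
      ^ ((n:ℝ)/2) = Real.exp x * An / (2*(2 - Real.exp x)) := by
    rw [exp_pow_half _ hn, Real.exp_sub, Real.exp_add, Real.exp_log (by linarith : (0:ℝ) < An),
      Real.exp_log ha]
  have hD : Dcoef n (Real.exp (2*x/(n:ℝ)))
      = (2*(1+(n:ℝ))/(n:ℝ))*(2*Real.exp (-x) - 1) := by
    unfold Dcoef
    rw [hbPn]
  have hDd : Dcoef n (Real.exp (2*x/(n:ℝ)))
      * (Real.exp (2*(x + Real.log An - Real.log (2*(2 - Real.exp x)))/(n:ℝ))) ^ ((n:ℝ)/2)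
      = ((1+(n:ℝ))/(n:ℝ))*An := by
    rw [hD, hdP]
    have h8 : (2*Real.exp (-x) - 1)*(Real.exp x * An / (2*(2 - Real.exp x))) = An/2 := by
      rw [show (2*Real.exp (-x) - 1)*(Real.exp x * An / (2*(2 - Real.exp x)))
        = ((2*Real.exp (-x) - 1)*Real.exp x) * (An / (2*(2 - Real.exp x))) by ring, h5]
      field_simp
    rw [mul_assoc, h8]
    field_simp
  refine ⟨?_, ?_, ?_, ?_, ?_, ?_⟩
  · -- 1 < b
    have : Real.exp 0 < Real.exp (2*x/(n:ℝ)) := Real.exp_lt_exp.mpr (by positivity)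
    rwa [Real.exp_zero] at this
  · -- b < d
    apply Real.exp_lt_exp.mpr
    have hlogA : 0 < Real.log An := Real.log_pos hAn1
    have hloga : Real.log (2*(2 - Real.exp x)) ≤ 0 := Real.log_nonpos ha.le ha1
    exact (div_lt_div_iff₀ hn0 hn0).mpr (by nlinarith)
  · -- 0 < D
    rw [hD]
    exact mul_pos (by positivity) h2e
  · -- cond at b
    rw [hbP, hD, neg_div]
    have h7 : 2*(1+(n:ℝ))*(2 - Real.exp x) < 2+(n:ℝ) := by nlinarith
    have e9 : (2*(1+(n:ℝ))/(n:ℝ))*(2*Real.exp (-x) - 1)*Real.exp x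
        = (2*(1+(n:ℝ))*(2 - Real.exp x))/(n:ℝ) := by
      rw [mul_assoc, h5]
      ring
    rw [e9]
    have h10 : (2*(1+(n:ℝ))*(2 - Real.exp x))/(n:ℝ) < (2+(n:ℝ))/(n:ℝ) :=
      (div_lt_div_iff₀ hn0 hn0).mpr (by nlinarith)
    linarith
  · rw [hDd, neg_div]
    have e10 : ((1+(n:ℝ))/(n:ℝ))*An = ((1+(n:ℝ))*An)/(n:ℝ) := by ring
    rw [e10]
    have h10 : (2+(n:ℝ))/(n:ℝ) < ((1+(n:ℝ))*An)/(n:ℝ) :=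
      (div_lt_div_iff₀ hn0 hn0).mpr (by nlinarith)
    linarith
  · rw [hDd, neg_div]
    have e10 : ((1+(n:ℝ))/(n:ℝ))*An = ((1+(n:ℝ))*An)/(n:ℝ) := by ring
    rw [e10]
    have h10 : ((1+(n:ℝ))*An)/(n:ℝ) < (3*(n:ℝ)+2)/(n:ℝ) :=
      (div_lt_div_iff₀ hn0 hn0).mpr (by nlinarith)
    have e11 : (3*(n:ℝ)+2)/(n:ℝ) = 2 + (2+(n:ℝ))/(n:ℝ) := by
      field_simp
      ring
    linarith [e11 ▸ h10]

lemma t0_exp_eq (x : ℝ) {n : ℕ} (hn : 1 ≤ n) (hex2 : Real.exp x < 2)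
    (hex32 : 3/2 ≤ Real.exp x) :
    t0 n (Real.exp (2*x/(n:ℝ)))
      = Real.exp (2*(Real.log ((2+(n:ℝ))/(1+(n:ℝ))) + x
          - Real.log (2*(2-Real.exp x)))/(n:ℝ)) := by
  have hn0 : (0:ℝ) < (n:ℝ) := by exact_mod_cast hn
  have h2mx : (0:ℝ) < 2 - Real.exp x := by linarith
  have h2e : 0 < 2*Real.exp (-x) - 1 := by nlinarith [Real.exp_pos x, two_exp_neg_eq x]
  have hC1 : (0:ℝ) < (2+(n:ℝ))/(2*(1+(n:ℝ))) := by positivity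
  unfold t0
  rw [exp_pow_half_neg x hn, Real.rpow_def_of_pos hC1, Real.rpow_def_of_pos h2e,
    ← Real.exp_add]
  congr 1
  have hlogC2 : Real.log (2*Real.exp (-x) - 1)
      = Real.log (2*(2-Real.exp x)) - Real.log 2 - x := by
    have e : 2*Real.exp (-x) - 1 = (2*(2 - Real.exp x)/2) * Real.exp (-x) := by
      rw [Real.exp_neg]
      field_simp [Real.exp_ne_zero x]
      try ring
    rw [e, Real.log_mul (by positivity) (Real.exp_ne_zero _),
      Real.log_div (by positivity) two_ne_zero, Real.log_exp]
    ring
  have hlogC1 : Real.log ((2+(n:ℝ))/(2*(1+(n:ℝ))))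
      = Real.log ((2+(n:ℝ))/(1+(n:ℝ))) - Real.log 2 := by
    rw [show (2+(n:ℝ))/(2*(1+(n:ℝ))) = ((2+(n:ℝ))/(1+(n:ℝ)))/2 by
      rw [div_div, mul_comm], Real.log_div (by positivity) two_ne_zero]
  rw [hlogC1, hlogC2]
  field_simp
  try ring

set_option maxHeartbeats 2000000 in
lemma key_tendsto (x y : ℝ) (hx1 : Real.log (3/2) ≤ x) (hx2 : x < Real.log 2)
    (hy1 : Real.exp (-y) ≤ 2*(2 - Real.exp x)) (hy2 : 2*(2 - Real.exp x) ≤ 3*Real.exp (-y)) :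
    ∃ bs ds : ℕ → ℝ, (∀ n : ℕ, 1 ≤ n → (bs n, ds n) ∈ Sset n) ∧
      Tendsto (fun n : ℕ => ratio n (bs n) (ds n)) atTop
        (nhds ((x + y) / (2*Real.exp x - x - 4 - y + 2*(2 - Real.exp x)*(Real.exp y + 1)
          - 2*Real.log (2*(2 - Real.exp x))))) := by
  have hex2 : Real.exp x < 2 := by
    have h := Real.exp_lt_exp.mpr hx2
    rwa [Real.exp_log (by norm_num : (0:ℝ) < 2)] at h
  have hex32 : (3:ℝ)/2 ≤ Real.exp x := by
    have h := Real.exp_le_exp.mpr hx1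
    rwa [Real.exp_log (by norm_num : (0:ℝ) < 3/2)] at h
  have hx0 : (0:ℝ) < x := lt_of_lt_of_le (Real.log_pos (by norm_num)) hx1
  set a := 2*(2 - Real.exp x) with ha_def
  have ha : 0 < a := by rw [ha_def]; linarith
  have ha1 : a ≤ 1 := by rw [ha_def]; linarith
  set A0 := a * Real.exp y with hA0_def
  have hA01 : 1 ≤ A0 := by
    have h1 := mul_le_mul_of_nonneg_right hy1 (Real.exp_pos y).le
    rwa [← Real.exp_add, neg_add_cancel, Real.exp_zero] at h1
  have hA03 : A0 ≤ 3 := by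
    have h1 := mul_le_mul_of_nonneg_right hy2 (Real.exp_pos y).le
    have h2 : 3*Real.exp (-y)*Real.exp y = 3 := by
      rw [mul_assoc, ← Real.exp_add, neg_add_cancel, Real.exp_zero, mul_one]
    rw [h2] at h1
    exact h1
  set A : ℕ → ℝ := fun n => ((n:ℝ)^2*A0 + 4*(n:ℝ) + 2)/((n:ℝ)+1)^2 with hA_def
  have hApos : ∀ n : ℕ, 0 < A n := by
    intro n
    simp only [hA_def]
    have hnum : (0:ℝ) < (n:ℝ)^2*A0 + 4*(n:ℝ) + 2 := by
      nlinarith [sq_nonneg (n:ℝ), (Nat.cast_nonneg n : (0:ℝ) ≤ (n:ℝ))]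
    exact div_pos hnum (by positivity)
  have hA1 : ∀ n : ℕ, 1 ≤ A n := by
    intro n
    simp only [hA_def]
    rw [le_div_iff₀ (by positivity)]
    nlinarith [sq_nonneg (n:ℝ), (Nat.cast_nonneg n : (0:ℝ) ≤ (n:ℝ)),
      mul_nonneg (sq_nonneg (n:ℝ)) (by linarith : (0:ℝ) ≤ A0 - 1)]
  have hAgt : ∀ n : ℕ, 1 ≤ n → (2+(n:ℝ)) < (1+(n:ℝ))*A n := by
    intro n hn
    have hn0 : (0:ℝ) < (n:ℝ) := by exact_mod_cast hn
    have hn1 : (1:ℝ) ≤ (n:ℝ) := by exact_mod_cast hn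
    simp only [hA_def]
    rw [← mul_div_assoc, lt_div_iff₀ (by positivity)]
    nlinarith [mul_nonneg (mul_nonneg hn0.le hn0.le) (by linarith : (0:ℝ) ≤ A0 - 1),
      mul_nonneg (by linarith : (0:ℝ) ≤ 1+(n:ℝ))
        (mul_nonneg (mul_nonneg hn0.le hn0.le) (by linarith : (0:ℝ) ≤ A0 - 1))]
  have hAlt : ∀ n : ℕ, 1 ≤ n → (1+(n:ℝ))*A n < 3*(n:ℝ)+2 := by
    intro n hn
    have hn0 : (0:ℝ) < (n:ℝ) := by exact_mod_cast hn
    have hn1 : (1:ℝ) ≤ (n:ℝ) := by exact_mod_cast hn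
    simp only [hA_def]
    rw [← mul_div_assoc, div_lt_iff₀ (by positivity)]
    nlinarith [mul_nonneg (by linarith : (0:ℝ) ≤ 1+(n:ℝ))
        (mul_nonneg (mul_nonneg hn0.le hn0.le) (by linarith : (0:ℝ) ≤ 3 - A0))]
  have hA1' : ∀ n : ℕ, 1 ≤ n → 1 < A n := by
    intro n hn
    have hn0 : (0:ℝ) < (n:ℝ) := by exact_mod_cast hn
    nlinarith [hAgt n hn]
  have hmem : ∀ n : ℕ, 1 ≤ n →
      (Real.exp (2*x/(n:ℝ)), Real.exp (2*(x + Real.log (A n) - Real.log a)/(n:ℝ))) ∈ Sset n := by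
    intro n hn
    rw [ha_def]
    exact mem_Sset_exp x (A n) n hn hex2 hex32 hx0 (hA1' n hn) (hAgt n hn) (hAlt n hn)
  refine ⟨fun n => Real.exp (2*x/(n:ℝ)),
    fun n => Real.exp (2*(x + Real.log (A n) - Real.log a)/(n:ℝ)), hmem, ?_⟩
  -- limits
  have hlimA : Tendsto A atTop (nhds A0) := by
    apply tendsto_comp_inv (G := fun r => (A0 + 4*r + 2*r^2)/((1+r)^2))
      (ContinuousAt.div (by fun_prop) (by fun_prop) (by norm_num)) (by norm_num)
    filter_upwards [eventually_ge_atTop 1] with n hn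
    have hn0 : (0:ℝ) < (n:ℝ) := by exact_mod_cast hn
    simp only [hA_def]
    rw [div_eq_div_iff (by positivity) (by positivity)]
    field_simp
    try ring
  have hlogA : Tendsto (fun n => Real.log (A n)) atTop (nhds (Real.log A0)) :=
    (Real.continuousAt_log (by linarith : A0 ≠ 0)).tendsto.comp hlimA
  have hlogA0 : Real.log A0 = Real.log a + y := by
    rw [hA0_def, Real.log_mul ha.ne' (Real.exp_ne_zero y), Real.log_exp]
  have hθd : Tendsto (fun n => x + Real.log (A n) - Real.log a) atTop (nhds (x + y)) := by
    have he : x + Real.log A0 - Real.log a = x + y := by rw [hlogA0]; ring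
    rw [← he]
    exact (tendsto_const_nhds.add hlogA).sub tendsto_const_nhds
  have hθd0 : ∀ n : ℕ, 0 ≤ x + Real.log (A n) - Real.log a := by
    intro n
    have h1 : 0 ≤ Real.log (A n) := Real.log_nonneg (hA1 n)
    have h2 : Real.log a ≤ 0 := Real.log_nonpos ha.le ha1
    linarith
  have hSEd := tendsto_scaled_exp hθd hθd0
  have hSEb := tendsto_scaled_exp (tendsto_const_nhds (x := x)) (fun _ => hx0.le)
  have hfrac : Tendsto (fun n : ℕ => (2+(n:ℝ))/(1+(n:ℝ))) atTop (nhds 1) := by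
    apply tendsto_comp_inv (G := fun r => (2*r+1)/(r+1))
      (ContinuousAt.div (by fun_prop) (by fun_prop) (by norm_num)) (by norm_num)
    filter_upwards [eventually_ge_atTop 1] with n hn
    have hn0 : (0:ℝ) < (n:ℝ) := by exact_mod_cast hn
    rw [div_eq_div_iff (by positivity) (by positivity)]
    field_simp
    try ring
  have hθτ : Tendsto (fun n : ℕ => Real.log ((2+(n:ℝ))/(1+(n:ℝ))) + x - Real.log a)
      atTop (nhds (x - Real.log a)) := by
    have hlog1 : Tendsto (fun n : ℕ => Real.log ((2+(n:ℝ))/(1+(n:ℝ)))) atTop (nhds 0) := by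
      have h2 := (Real.continuousAt_log one_ne_zero).tendsto.comp hfrac
      rw [Real.log_one] at h2; exact h2
    have he : (0:ℝ) + x - Real.log a = x - Real.log a := by ring
    rw [← he]
    exact (hlog1.add tendsto_const_nhds).sub tendsto_const_nhds
  have hθτ0 : ∀ n : ℕ, 0 ≤ Real.log ((2+(n:ℝ))/(1+(n:ℝ))) + x - Real.log a := by
    intro n
    have h1 : (1:ℝ) ≤ (2+(n:ℝ))/(1+(n:ℝ)) := by
      rw [le_div_iff₀ (by positivity)]
      linarith [(Nat.cast_nonneg n : (0:ℝ) ≤ (n:ℝ))]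
    have h2 := Real.log_nonneg h1
    have h3 : Real.log a ≤ 0 := Real.log_nonpos ha.le ha1
    linarith
  have hSEt := tendsto_scaled_exp hθτ hθτ0
  have hc1 : Tendsto (fun n : ℕ => (2+(n:ℝ))/(n:ℝ)) atTop (nhds 1) := by
    apply tendsto_comp_inv (G := fun r => 2*r+1) (by fun_prop) (by norm_num)
    filter_upwards [eventually_ge_atTop 1] with n hn
    have hn0 : (0:ℝ) < (n:ℝ) := by exact_mod_cast hn
    field_simp
  have hc2 : Tendsto (fun n : ℕ => 2*(n:ℝ)/(2+(n:ℝ))) atTop (nhds 2) := by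
    apply tendsto_comp_inv (G := fun r => 2/(2*r+1))
      (ContinuousAt.div (by fun_prop) (by fun_prop) (by norm_num)) (by norm_num)
    filter_upwards [eventually_ge_atTop 1] with n hn
    have hn0 : (0:ℝ) < (n:ℝ) := by exact_mod_cast hn
    rw [div_eq_div_iff (by positivity) (by positivity)]
    field_simp
    try ring
  have hc3 : Tendsto (fun n : ℕ => (2*(1+(n:ℝ))/((n:ℝ)*(2+(n:ℝ))))*A n) atTop (nhds 0) := by
    have hcoef : Tendsto (fun n : ℕ => 2*(1+(n:ℝ))/((n:ℝ)*(2+(n:ℝ)))) atTop (nhds 0) := by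
      apply tendsto_comp_inv (G := fun r => 2*r*(1+r)/(2*r+1))
        (ContinuousAt.div (by fun_prop) (by fun_prop) (by norm_num)) (by norm_num)
      filter_upwards [eventually_ge_atTop 1] with n hn
      have hn0 : (0:ℝ) < (n:ℝ) := by exact_mod_cast hn
      rw [div_eq_div_iff (by positivity) (by positivity)]
      field_simp
      try ring
    have h2 := hcoef.mul hlimA
    simpa using h2
  have hK : Tendsto (fun n : ℕ => -2/(2+(n:ℝ)) + ((1+(n:ℝ))/(2+(n:ℝ)))*A n)
      atTop (nhds A0) := by
    have h1 : Tendsto (fun n : ℕ => -2/(2+(n:ℝ))) atTop (nhds 0) := by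
      apply tendsto_comp_inv (G := fun r => -2*r/(2*r+1))
        (ContinuousAt.div (by fun_prop) (by fun_prop) (by norm_num)) (by norm_num)
      filter_upwards [eventually_ge_atTop 1] with n hn
      have hn0 : (0:ℝ) < (n:ℝ) := by exact_mod_cast hn
      rw [div_eq_div_iff (by positivity) (by positivity)]
      field_simp
      try ring
    have h2 : Tendsto (fun n : ℕ => (1+(n:ℝ))/(2+(n:ℝ))) atTop (nhds 1) := by
      apply tendsto_comp_inv (G := fun r => (r+1)/(2*r+1))
        (ContinuousAt.div (by fun_prop) (by fun_prop) (by norm_num)) (by norm_num)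
      filter_upwards [eventually_ge_atTop 1] with n hn
      have hn0 : (0:ℝ) < (n:ℝ) := by exact_mod_cast hn
      rw [div_eq_div_iff (by positivity) (by positivity)]
      field_simp
      try ring
    have h3 := h1.add (h2.mul hlimA)
    simpa using h3
  have hdenom_id : ∀ n : ℕ, 1 ≤ n →
      ((n:ℝ)/2) * denom n (Real.exp (2*x/(n:ℝ)))
        (Real.exp (2*(x + Real.log (A n) - Real.log a)/(n:ℝ)))
      = (-2/(2+(n:ℝ)) + ((1+(n:ℝ))/(2+(n:ℝ)))*A n)
        + ((2*(1+(n:ℝ))/((n:ℝ)*(2+(n:ℝ))))*A n - (2+(n:ℝ))/(n:ℝ))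
            * (((n:ℝ)/2)*(Real.exp (2*(x + Real.log (A n) - Real.log a)/(n:ℝ)) - 1))
        - (2*(n:ℝ)/(2+(n:ℝ))) * (((n:ℝ)/2)*(Real.exp (2*x/(n:ℝ)) - 1))
        + 2*(((n:ℝ)/2)*(Real.exp (2*(Real.log ((2+(n:ℝ))/(1+(n:ℝ))) + x
            - Real.log a)/(n:ℝ)) - 1)) := by
    intro n hn
    have hn0 : (0:ℝ) < (n:ℝ) := by exact_mod_cast hn
    have hdsP : (Real.exp (2*(x + Real.log (A n) - Real.log a)/(n:ℝ))) ^ ((n:ℝ)/2)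
        = Real.exp x * A n / a := by
      rw [exp_pow_half _ hn, Real.exp_sub, Real.exp_add,
        Real.exp_log (hApos n), Real.exp_log ha]
    have hsmall : (2*(Real.exp (2*x/(n:ℝ)))^(-(n:ℝ)/2) - 1)
        * (Real.exp (2*(x + Real.log (A n) - Real.log a)/(n:ℝ)))^(1+(n:ℝ)/2)
        = (A n/2) * Real.exp (2*(x + Real.log (A n) - Real.log a)/(n:ℝ)) := by
      rw [exp_pow_half_neg x hn,
        Real.rpow_add (Real.exp_pos _) 1 ((n:ℝ)/2), Real.rpow_one, hdsP,
        show (2*Real.exp (-x) - 1)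
            * (Real.exp (2*(x + Real.log (A n) - Real.log a)/(n:ℝ))
              * (Real.exp x * A n / a))
          = ((2*Real.exp (-x) - 1) * Real.exp x)
            * (Real.exp (2*(x + Real.log (A n) - Real.log a)/(n:ℝ)) * (A n / a)) by ring,
        two_exp_neg_eq x, ha_def]
      have hne : (2:ℝ) - Real.exp x ≠ 0 := by linarith
      field_simp
    have hterm : 4*(1+(n:ℝ))/((n:ℝ)*(2+(n:ℝ)))
        * (2*(Real.exp (2*x/(n:ℝ)))^(-(n:ℝ)/2) - 1)
        * (Real.exp (2*(x + Real.log (A n) - Real.log a)/(n:ℝ)))^(1+(n:ℝ)/2)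
        = 4*(1+(n:ℝ))/((n:ℝ)*(2+(n:ℝ)))
          * ((A n/2) * Real.exp (2*(x + Real.log (A n) - Real.log a)/(n:ℝ))) := by
      rw [mul_assoc, hsmall]
    unfold denom
    rw [hterm, t0_exp_eq x hn hex2 hex32, ← ha_def]
    have h2n : (2:ℝ)+(n:ℝ) ≠ 0 := by positivity
    field_simp
    ring
  have hWlim : Tendsto (fun n : ℕ => ((n:ℝ)/2) * denom n (Real.exp (2*x/(n:ℝ)))
      (Real.exp (2*(x + Real.log (A n) - Real.log a)/(n:ℝ)))) atTop
      (nhds (A0 - (x+y) - 2*Real.log a)) := by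
    have hcomb := ((hK.add ((hc3.sub hc1).mul hSEd)).sub (hc2.mul hSEb)).add
      (hSEt.const_mul 2)
    have he : A0 + (0 - 1)*(x + y) - 2*x + 2*(x - Real.log a)
        = A0 - (x+y) - 2*Real.log a := by ring
    rw [he] at hcomb
    apply Tendsto.congr' ?_ hcomb
    filter_upwards [eventually_ge_atTop 1] with n hn
    exact (hdenom_id n hn).symm
  have hW0pos : 0 < A0 - (x+y) - 2*Real.log a := by
    have h1 : A0 = Real.exp (Real.log a + y) := by
      rw [Real.exp_add, Real.exp_log ha, hA0_def]
    have h2 := Real.add_one_le_exp (Real.log a + y)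
    have h3 : Real.log a ≤ 0 := Real.log_nonpos ha.le ha1
    have h4 : x < 1 := by
      have := Real.log_two_lt_d9
      linarith
    have h5 : Real.log a + y + 1 ≤ A0 := by rw [h1]; exact h2
    linarith
  have hfinal := hSEd.div hWlim hW0pos.ne'
  have hval : (x + y)/(A0 - (x+y) - 2*Real.log a)
      = (x + y)/(2*Real.exp x - x - 4 - y + a*(Real.exp y + 1) - 2*Real.log a) := by
    congr 1
    rw [hA0_def, ha_def]
    ring
  rw [show (x + y) / (2*Real.exp x - x - 4 - y + a*(Real.exp y + 1) - 2*Real.log a)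
    = (x + y)/(A0 - (x+y) - 2*Real.log a) from hval.symm]
  apply Tendsto.congr' ?_ hfinal
  filter_upwards [eventually_ge_atTop 2] with n hn2
  have hn1 : 1 ≤ n := le_trans (by norm_num) hn2
  have hn0 : (0:ℝ) < (n:ℝ) := by exact_mod_cast hn1
  have hfact : Facts n (Real.exp (2*x/(n:ℝ)))
      (Real.exp (2*(x + Real.log (A n) - Real.log a)/(n:ℝ))) :=
    facts_of_mem hn2 (hmem n hn1)
  show ((n:ℝ)/2 * (Real.exp (2*(x + Real.log (A n) - Real.log a)/(n:ℝ)) - 1))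
      / ((n:ℝ)/2 * denom n (Real.exp (2*x/(n:ℝ)))
          (Real.exp (2*(x + Real.log (A n) - Real.log a)/(n:ℝ))))
      = ratio n (Real.exp (2*x/(n:ℝ))) (Real.exp (2*(x + Real.log (A n) - Real.log a)/(n:ℝ)))
  rw [ratio_eq hfact, mul_div_mul_left _ _ (by positivity : (n:ℝ)/2 ≠ 0)]

end Limit

end StmtAux

/-- `liminf_{m→∞} R_m` is at least the supremum of
`(x+y)/(2e^x - x - 4 - y + 2(2-e^x)(e^y+1) - 2 ln(2(2-e^x)))` over
`x ∈ [ln(3/2), ln 2)` and `y` with `e^{-y} ≤ 2(2-e^x) ≤ 3e^{-y}`. -/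
theorem stmt_11 :
    sSup {v : ℝ | ∃ x y : ℝ, x ∈ Set.Ico (Real.log (3 / 2)) (Real.log 2) ∧
        Real.exp (-y) ≤ 2 * (2 - Real.exp x) ∧ 2 * (2 - Real.exp x) ≤ 3 * Real.exp (-y) ∧
        v = (x + y) / (2 * Real.exp x - x - 4 - y
          + 2 * (2 - Real.exp x) * (Real.exp y + 1)
          - 2 * Real.log (2 * (2 - Real.exp x)))} ≤
      Filter.atTop.liminf fun m : ℕ => Rsp m := by
  have hub : ∀ᶠ m : ℕ in Filter.atTop, Rsp m ≤ 100 := by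
    filter_upwards [Filter.eventually_ge_atTop 10] with m hm
    apply Real.sSup_le ?_ (by norm_num)
    rintro r ⟨b, d, hS, rfl⟩
    exact StmtAux.ratio_le_100 (StmtAux.facts_of_mem (le_trans (by norm_num) hm) hS)
      (by exact_mod_cast hm)
  have hRsp0 : ∀ m : ℕ, 0 ≤ Rsp m := fun m =>
    Real.sSup_nonneg (by rintro r ⟨b, d, _, rfl⟩; exact StmtAux.ratio_nonneg m b d)
  have hbdd : Filter.IsBoundedUnder (· ≤ ·) Filter.atTop Rsp := ⟨100, by
    rw [Filter.eventually_map] at *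
    exact hub⟩
  have hcob : Filter.IsCoboundedUnder (· ≥ ·) Filter.atTop Rsp :=
    hbdd.isCoboundedUnder_ge
  apply Real.sSup_le ?_ ?_
  · rintro v ⟨x, y, ⟨hx1, hx2⟩, hy1, hy2, rfl⟩
    obtain ⟨bs, ds, hmem, htend⟩ := StmtAux.key_tendsto x y hx1 hx2 hy1 hy2
    have hle : ∀ᶠ n : ℕ in Filter.atTop, ratio n (bs n) (ds n) ≤ Rsp n := by
      filter_upwards [Filter.eventually_ge_atTop 10] with n hn
      have hmemS : ratio n (bs n) (ds n)
          ∈ {r : ℝ | ∃ b d : ℝ, (b, d) ∈ Sset n ∧ r = ratio n b d} :=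
        ⟨bs n, ds n, hmem n (le_trans (by norm_num) hn), rfl⟩
      have hbddS : BddAbove {r : ℝ | ∃ b d : ℝ, (b, d) ∈ Sset n ∧ r = ratio n b d} := by
        refine ⟨100, ?_⟩
        rintro r ⟨b, d, hS, rfl⟩
        exact StmtAux.ratio_le_100 (StmtAux.facts_of_mem (le_trans (by norm_num) hn) hS)
          (by exact_mod_cast hn)
      exact le_csSup hbddS hmemS
    have hbd1 : Filter.IsBoundedUnder (· ≥ ·) Filter.atTop
        (fun n : ℕ => ratio n (bs n) (ds n)) := ⟨0, by
      rw [Filter.eventually_map]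
      exact Filter.Eventually.of_forall (fun n => StmtAux.ratio_nonneg n (bs n) (ds n))⟩
    calc (x + y) / (2 * Real.exp x - x - 4 - y
          + 2 * (2 - Real.exp x) * (Real.exp y + 1)
          - 2 * Real.log (2 * (2 - Real.exp x)))
        = Filter.atTop.liminf (fun n : ℕ => ratio n (bs n) (ds n)) := htend.liminf_eq.symm
      _ ≤ Filter.atTop.liminf (fun m : ℕ => Rsp m) :=
          Filter.liminf_le_liminf hle hbd1 hcob
  · exact Filter.le_liminf_of_le hcob (Filter.Eventually.of_forall hRsp0)
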